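/- arXiv:1608.02595 — 6 statements merged into one kernel-verified Lean document; each statement's English description precedes it below -/
import Mathlib

section
/- Let p be an odd prime. Then the set Σ₃(p) of Lagrangian stochastic subspaces of V₆ has exactly 2p+2 elements. Explicitly, Σ₃(p) consists precisely of the following pairwise distinct subspaces: T_{⋆,even} = span{((1,1,1),(1,1,1)), ((1,0,0),(1,0,0)), ((0,1,0),(0,1,0))}; T_{m,even} = span{((1,1,1),(1,1,1)), ((−1,m,1),(1,m,−1)), ((m,1,−1),(m,−1,1))} for each m ∈ ZMod p; T_{⋆,odd} = span{((1,1,1),(1,1,1)), ((−1,0,1),(1,0,−1)), ((0,1,0),(0,1,0))}; and T_{m,odd} = span{((1,1,1),(1,1,1)), ((1,m,0),(1,m,0)), ((−m,1,m−1),(m,−1,1−m))} for each m ∈ ZMod p. -/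
/-- The 6-dimensional phase space `V₆ = (Fin 3 → ZMod p) × (Fin 3 → ZMod p)`. -/
abbrev V6 (p : ℕ) := (Fin 3 → ZMod p) × (Fin 3 → ZMod p)

/-- Dot product on `Fin 3 → ZMod p`. -/
def dotP {p : ℕ} (x y : Fin 3 → ZMod p) : ZMod p := ∑ i, x i * y i

/-- The bilinear form `β((x⃗,y⃗),(x⃗',y⃗')) = x⃗·x⃗' − y⃗·y⃗'`. -/
def betaF {p : ℕ} (v w : V6 p) : ZMod p := dotP v.1 w.1 - dotP v.2 w.2

/-- The all-ones vector `𝟙₆`. -/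
def onesV (p : ℕ) : V6 p := (fun _ => 1, fun _ => 1)

/-- `Σ₃(p)`: the set of Lagrangian stochastic subspaces of `V₆`. -/
def Sigma3 (p : ℕ) : Set (Submodule (ZMod p) (V6 p)) :=
  {T | Module.finrank (ZMod p) T = 3 ∧ (∀ v ∈ T, ∀ w ∈ T, betaF v w = 0) ∧ onesV p ∈ T}

/-- The explicit family of `2p+2` subspaces: `(false, none) ↦ T_{⋆,even}`,
`(false, some m) ↦ T_{m,even}`, `(true, none) ↦ T_{⋆,odd}`, `(true, some m) ↦ T_{m,odd}`. -/
def Texp (p : ℕ) : Bool × Option (ZMod p) → Submodule (ZMod p) (V6 p)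
  | (false, none) => Submodule.span (ZMod p)
      {(![1,1,1], ![1,1,1]), (![1,0,0], ![1,0,0]), (![0,1,0], ![0,1,0])}
  | (false, some m) => Submodule.span (ZMod p)
      {(![1,1,1], ![1,1,1]), (![-1,m,1], ![1,m,-1]), (![m,1,-1], ![m,-1,1])}
  | (true, none) => Submodule.span (ZMod p)
      {(![1,1,1], ![1,1,1]), (![-1,0,1], ![1,0,-1]), (![0,1,0], ![0,1,0])}
  | (true, some m) => Submodule.span (ZMod p)
      {(![1,1,1], ![1,1,1]), (![1,m,0], ![1,m,0]), (![-m,1,m-1], ![m,-1,1-m])}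

section Aux
variable {p : ℕ}


/-- betaF as a bilinear form -/
def Bf (p : ℕ) : LinearMap.BilinForm (ZMod p) (V6 p) :=
  LinearMap.mk₂ (ZMod p) betaF
    (by intro x y z; simp [betaF, dotP, Fin.sum_univ_three]; ring)
    (by intro c x y; simp [betaF, dotP, Fin.sum_univ_three]; ring)
    (by intro x y z; simp [betaF, dotP, Fin.sum_univ_three]; ring)
    (by intro c x y; simp [betaF, dotP, Fin.sum_univ_three]; ring)

@[simp] lemma Bf_apply (v w : V6 p) : Bf p v w = betaF v w := rfl

lemma Bf_symm : (Bf p).IsSymm := by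
  rw [LinearMap.BilinForm.isSymm_def]
  intro x y; simp [betaF, dotP, Fin.sum_univ_three]; ring

lemma dotP_expand (x y : Fin 3 → ZMod p) : dotP x y = x 0 * y 0 + x 1 * y 1 + x 2 * y 2 := by
  simp [dotP, Fin.sum_univ_three]

lemma Bf_nondeg [Fact p.Prime] : (Bf p).Nondegenerate := by
  constructor <;> intro v hv
  all_goals
    have h1 := hv (![1,0,0], 0)
    have h2 := hv (![0,1,0], 0)
    have h3 := hv (![0,0,1], 0)
    have h4 := hv (0, ![1,0,0])
    have h5 := hv (0, ![0,1,0])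
    have h6 := hv (0, ![0,0,1])
    simp [betaF, dotP_expand] at h1 h2 h3 h4 h5 h6
    ext i <;> fin_cases i <;> simp_all

lemma finrank_V6 [Fact p.Prime] : Module.finrank (ZMod p) (V6 p) = 6 := by
  rw [Module.finrank_prod, Module.finrank_fin_fun]

/-- key: a Lagrangian T equals its own orthogonal; membership criterion -/
lemma mem_of_perp [Fact p.Prime] {T : Submodule (ZMod p) (V6 p)}
    (h3 : Module.finrank (ZMod p) T = 3)
    (hiso : ∀ v ∈ T, ∀ w ∈ T, betaF v w = 0)
    {v : V6 p} (hv : ∀ w ∈ T, betaF w v = 0) : v ∈ T := by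
  have hrefl : (Bf p).IsRefl := Bf_symm.isRefl
  have hle : T ≤ (Bf p).orthogonal T := by
    intro x hx
    rw [LinearMap.BilinForm.mem_orthogonal_iff]
    intro n hn
    exact hiso n hn x hx
  have hfr : Module.finrank (ZMod p) ((Bf p).orthogonal T) = 3 := by
    rw [LinearMap.BilinForm.finrank_orthogonal Bf_nondeg, finrank_V6, h3]
  have : T = (Bf p).orthogonal T :=
    Submodule.eq_of_le_of_finrank_le hle (by rw [hfr, h3])
  rw [this, LinearMap.BilinForm.mem_orthogonal_iff]
  intro n hn; exact hv n hn

lemma span_isotropic {s : Set (V6 p)} (h : ∀ a ∈ s, ∀ b ∈ s, betaF a b = 0) :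
    ∀ v ∈ Submodule.span (ZMod p) s, ∀ w ∈ Submodule.span (ZMod p) s, betaF v w = 0 := by
  have step : ∀ a ∈ s, ∀ w ∈ Submodule.span (ZMod p) s, betaF a w = 0 := by
    intro a ha w hw
    induction hw using Submodule.span_induction with
    | mem x hx => exact h a ha x hx
    | zero => simp [betaF, dotP]
    | add x y _ _ hx hy =>
        show Bf p a (x + y) = 0
        rw [map_add]; simp [hx, hy]
    | smul c x _ hx =>
        show Bf p a (c • x) = 0
        rw [map_smul]; simp [hx]
  intro v hv w hw
  induction hv using Submodule.span_induction with
  | mem x hx => exact step x hx w hw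
  | zero => simp [betaF, dotP]
  | add x y _ _ hx hy =>
      show Bf p (x + y) w = 0
      rw [map_add]; simp only [LinearMap.add_apply, Bf_apply, hx, hy, add_zero]
  | smul c x _ hx =>
      show Bf p (c • x) w = 0
      rw [map_smul]; simp only [LinearMap.smul_apply, Bf_apply, hx, smul_zero]

lemma range_three {α : Type*} (a b c : α) : Set.range ![a, b, c] = {a, b, c} := by
  ext x
  constructor
  · rintro ⟨i, rfl⟩; fin_cases i <;> simp
  · rintro (rfl | rfl | rfl)
    exacts [⟨0, rfl⟩, ⟨1, rfl⟩, ⟨2, rfl⟩]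

lemma two_ne [Fact p.Prime] (hodd : p ≠ 2) : (2 : ZMod p) ≠ 0 := by
  have : ((2 : ℕ) : ZMod p) ≠ 0 := by
    rw [Ne, ZMod.natCast_eq_zero_iff]
    intro h
    exact hodd ((Nat.prime_dvd_prime_iff_eq (Fact.out) Nat.prime_two).mp h)
  simpa using this

lemma finrank_span_three [Fact p.Prime] {a b c : V6 p}
    (h : LinearIndependent (ZMod p) ![a, b, c]) :
    Module.finrank (ZMod p) (Submodule.span (ZMod p) {a, b, c}) = 3 := by
  rw [← range_three a b c, finrank_span_eq_card h]
  simp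

lemma onesV_eq : onesV p = ((![1,1,1] : Fin 3 → ZMod p), (![1,1,1] : Fin 3 → ZMod p)) := by
  unfold onesV
  refine Prod.ext ?_ ?_ <;> (funext i; fin_cases i <;> rfl)

/-- extract the six coordinate equations from a vanishing combination -/
lemma comb_coords {a b c : V6 p} {g : Fin 3 → ZMod p}
    (h : g 0 • a + g 1 • b + g 2 • c = 0) (i : Fin 3) :
    (g 0 * a.1 i + g 1 * b.1 i + g 2 * c.1 i = 0) ∧
    (g 0 * a.2 i + g 1 * b.2 i + g 2 * c.2 i = 0) := by
  constructor
  · have := congrFun (congrArg Prod.fst h) i; simpa using this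
  · have := congrFun (congrArg Prod.snd h) i; simpa using this

lemma li_of_coords {a b c : V6 p}
    (H : ∀ g : Fin 3 → ZMod p, g 0 • a + g 1 • b + g 2 • c = 0 → g 0 = 0 ∧ g 1 = 0 ∧ g 2 = 0) :
    LinearIndependent (ZMod p) ![a, b, c] := by
  rw [Fintype.linearIndependent_iff]
  intro g hg
  rw [Fin.sum_univ_three] at hg
  simp only [Matrix.cons_val_zero, Matrix.cons_val_one, Matrix.head_cons,
    Matrix.cons_val_two, Matrix.tail_cons] at hg
  obtain ⟨h0, h1, h2⟩ := H g hg
  intro i; fin_cases i <;> assumption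

section shapes
variable [Fact p.Prime] (hodd : p ≠ 2)

lemma li_even_star :
    LinearIndependent (ZMod p) ![((![1,1,1], ![1,1,1]) : V6 p), (![1,0,0], ![1,0,0]), (![0,1,0], ![0,1,0])] := by
  apply li_of_coords
  intro g hg
  obtain ⟨e0, _⟩ := comb_coords hg 0
  obtain ⟨e1, _⟩ := comb_coords hg 1
  obtain ⟨e2, _⟩ := comb_coords hg 2
  simp only [Matrix.cons_val_zero, Matrix.cons_val_one, Matrix.head_cons,
    Matrix.cons_val_two, Matrix.tail_cons] at e0 e1 e2
  refine ⟨by linear_combination e2, by linear_combination e0 - e2, by linear_combination e1 - e2⟩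

include hodd in
lemma li_even (m : ZMod p) :
    LinearIndependent (ZMod p) ![((![1,1,1], ![1,1,1]) : V6 p), (![-1,m,1], ![1,m,-1]), (![m,1,-1], ![m,-1,1])] := by
  have h2 := two_ne hodd
  apply li_of_coords
  intro g hg
  obtain ⟨e0, f0⟩ := comb_coords hg 0
  obtain ⟨e2, f2⟩ := comb_coords hg 2
  simp only [Matrix.cons_val_zero, Matrix.cons_val_one, Matrix.head_cons,
    Matrix.cons_val_two, Matrix.tail_cons] at e0 f0 e2 f2
  have h1 : g 1 = 0 := by
    have : (2 : ZMod p) * g 1 = 0 := by linear_combination f0 - e0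
    exact (mul_eq_zero.mp this).resolve_left h2
  have hg2 : g 2 = 0 := by
    have : (2 : ZMod p) * g 2 = 0 := by linear_combination f2 - e2 + 2 * h1
    exact (mul_eq_zero.mp this).resolve_left h2
  exact ⟨by linear_combination e2 - h1 + hg2, h1, hg2⟩

include hodd in
lemma li_odd_star :
    LinearIndependent (ZMod p) ![((![1,1,1], ![1,1,1]) : V6 p), (![-1,0,1], ![1,0,-1]), (![0,1,0], ![0,1,0])] := by
  apply li_of_coords
  intro g hg
  obtain ⟨e0, f0⟩ := comb_coords hg 0
  obtain ⟨e1, _⟩ := comb_coords hg 1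
  simp only [Matrix.cons_val_zero, Matrix.cons_val_one, Matrix.head_cons,
    Matrix.cons_val_two, Matrix.tail_cons] at e0 f0 e1
  have h1 : g 1 = 0 := by
    have : (2 : ZMod p) * g 1 = 0 := by linear_combination f0 - e0
    rcases mul_eq_zero.mp this with h | h
    · exact absurd h (two_ne hodd)
    · exact h
  have h0 : g 0 = 0 := by linear_combination e0 + h1
  exact ⟨h0, h1, by linear_combination e1 - h0⟩

include hodd in
lemma li_odd (m : ZMod p) :
    LinearIndependent (ZMod p) ![((![1,1,1], ![1,1,1]) : V6 p), (![1,m,0], ![1,m,0]), (![-m,1,m-1], ![m,-1,1-m])] := by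
  apply li_of_coords
  intro g hg
  obtain ⟨e0, _⟩ := comb_coords hg 0
  obtain ⟨e1, f1⟩ := comb_coords hg 1
  obtain ⟨e2, _⟩ := comb_coords hg 2
  simp only [Matrix.cons_val_zero, Matrix.cons_val_one, Matrix.head_cons,
    Matrix.cons_val_two, Matrix.tail_cons] at e0 e1 f1 e2
  have h2 : g 2 = 0 := by
    have : (2 : ZMod p) * g 2 = 0 := by linear_combination e1 - f1
    rcases mul_eq_zero.mp this with h | h
    · exact absurd h (two_ne hodd)
    · exact h
  have h0 : g 0 = 0 := by linear_combination e2 - (m-1) * h2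
  exact ⟨h0, by linear_combination e0 - h0 + m * h2, h2⟩

end shapes



lemma mem_span_triple_left {a b c : V6 p} : a ∈ Submodule.span (ZMod p) {a, b, c} :=
  Submodule.subset_span (by simp)
lemma mem_span_triple_mid {a b c : V6 p} : b ∈ Submodule.span (ZMod p) {a, b, c} :=
  Submodule.subset_span (by simp)
lemma mem_span_triple_right {a b c : V6 p} : c ∈ Submodule.span (ZMod p) {a, b, c} :=
  Submodule.subset_span (by simp)

lemma Texp_mem_Sigma3 [Fact p.Prime] (hodd : p ≠ 2) (i : Bool × Option (ZMod p)) :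
    Texp p i ∈ Sigma3 p := by
  obtain ⟨b, o⟩ := i
  have key : ∀ (s : Set (V6 p)), (∀ a ∈ s, ∀ b ∈ s, betaF a b = 0) →
      (∀ v ∈ Submodule.span (ZMod p) s, ∀ w ∈ Submodule.span (ZMod p) s, betaF v w = 0) :=
    fun s h => span_isotropic h
  match b, o with
  | false, none =>
      refine ⟨finrank_span_three li_even_star, key _ ?_, ?_⟩
      · rintro a (rfl | rfl | rfl) b (rfl | rfl | rfl) <;>
          (simp [betaF, dotP_expand]; try ring)
      · rw [onesV_eq]; exact mem_span_triple_left
  | false, some m =>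
      refine ⟨finrank_span_three (li_even hodd m), key _ ?_, ?_⟩
      · rintro a (rfl | rfl | rfl) b (rfl | rfl | rfl) <;>
          (simp [betaF, dotP_expand]; try ring)
      · rw [onesV_eq]; exact mem_span_triple_left
  | true, none =>
      refine ⟨finrank_span_three (li_odd_star hodd), key _ ?_, ?_⟩
      · rintro a (rfl | rfl | rfl) b (rfl | rfl | rfl) <;>
          (simp [betaF, dotP_expand]; try ring)
      · rw [onesV_eq]; exact mem_span_triple_left
  | true, some m =>
      refine ⟨finrank_span_three (li_odd hodd m), key _ ?_, ?_⟩
      · rintro a (rfl | rfl | rfl) b (rfl | rfl | rfl) <;>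
          (simp [betaF, dotP_expand]; try ring)
      · rw [onesV_eq]; exact mem_span_triple_left

lemma Texp_fn : Texp p (false, none) = Submodule.span (ZMod p)
      {(![1,1,1], ![1,1,1]), (![1,0,0], ![1,0,0]), (![0,1,0], ![0,1,0])} := rfl
lemma Texp_fs (m : ZMod p) : Texp p (false, some m) = Submodule.span (ZMod p)
      {(![1,1,1], ![1,1,1]), (![-1,m,1], ![1,m,-1]), (![m,1,-1], ![m,-1,1])} := rfl
lemma Texp_tn : Texp p (true, none) = Submodule.span (ZMod p)
      {(![1,1,1], ![1,1,1]), (![-1,0,1], ![1,0,-1]), (![0,1,0], ![0,1,0])} := rfl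
lemma Texp_ts (m : ZMod p) : Texp p (true, some m) = Submodule.span (ZMod p)
      {(![1,1,1], ![1,1,1]), (![1,m,0], ![1,m,0]), (![-m,1,m-1], ![m,-1,1-m])} := rfl

lemma Texp_inj [Fact p.Prime] (hodd : p ≠ 2) : Function.Injective (Texp p) := by
  have h2 := two_ne (p := p) hodd
  have contra : ∀ i j : Bool × Option (ZMod p), Texp p i = Texp p j →
      ∀ u w : V6 p, u ∈ Texp p i → w ∈ Texp p j → betaF u w = 0 := by
    intro i j h u w hu hw
    exact (Texp_mem_Sigma3 hodd j).2.1 u (h ▸ hu) w hw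
  rintro ⟨b, o⟩ ⟨b', o'⟩ h
  match b, o, b', o' with
  | false, none, false, none => rfl
  | false, some m, false, some m' =>
      have hb := contra _ _ h (![-1,m,1], ![1,m,-1]) (![m',1,-1], ![m',-1,1])
        (by rw [Texp_fs]; exact mem_span_triple_mid) (by rw [Texp_fs]; exact mem_span_triple_right)
      simp only [betaF, dotP_expand, Matrix.cons_val_zero, Matrix.cons_val_one, Matrix.head_cons,
        Matrix.cons_val_two, Matrix.tail_cons] at hb
      have : m = m' := by
        have h2' : (2 : ZMod p) * (m - m') = 0 := by
          linear_combination hb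
        have := (mul_eq_zero.mp h2').resolve_left h2
        linear_combination this
      rw [this]
  | true, none, true, none => rfl
  | true, some m, true, some m' =>
      have hb := contra _ _ h (![1,m,0], ![1,m,0]) (![-m',1,m'-1], ![m',-1,1-m'])
        (by rw [Texp_ts]; exact mem_span_triple_mid) (by rw [Texp_ts]; exact mem_span_triple_right)
      simp only [betaF, dotP_expand, Matrix.cons_val_zero, Matrix.cons_val_one, Matrix.head_cons,
        Matrix.cons_val_two, Matrix.tail_cons] at hb
      have : m = m' := by
        have h2' : (2 : ZMod p) * (m - m') = 0 := by linear_combination hb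
        have := (mul_eq_zero.mp h2').resolve_left h2
        linear_combination this
      rw [this]
  | false, none, false, some m =>
      have hb := contra _ _ h (![1,0,0], ![1,0,0]) (![-1,m,1], ![1,m,-1])
        (by rw [Texp_fn]; exact mem_span_triple_mid) (by rw [Texp_fs]; exact mem_span_triple_mid)
      simp only [betaF, dotP_expand, Matrix.cons_val_zero, Matrix.cons_val_one, Matrix.head_cons,
        Matrix.cons_val_two, Matrix.tail_cons] at hb
      exact absurd (by linear_combination -hb : (2:ZMod p) = 0) h2
  | false, some m, false, none =>
      have hb := contra _ _ h (![-1,m,1], ![1,m,-1]) (![1,0,0], ![1,0,0])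
        (by rw [Texp_fs]; exact mem_span_triple_mid) (by rw [Texp_fn]; exact mem_span_triple_mid)
      simp only [betaF, dotP_expand, Matrix.cons_val_zero, Matrix.cons_val_one, Matrix.head_cons,
        Matrix.cons_val_two, Matrix.tail_cons] at hb
      exact absurd (by linear_combination -hb : (2:ZMod p) = 0) h2
  | true, none, true, some m =>
      have hb := contra _ _ h (![0,1,0], ![0,1,0]) (![-m,1,m-1], ![m,-1,1-m])
        (by rw [Texp_tn]; exact mem_span_triple_right) (by rw [Texp_ts]; exact mem_span_triple_right)
      simp only [betaF, dotP_expand, Matrix.cons_val_zero, Matrix.cons_val_one, Matrix.head_cons,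
        Matrix.cons_val_two, Matrix.tail_cons] at hb
      exact absurd (by linear_combination hb : (2:ZMod p) = 0) h2
  | true, some m, true, none =>
      have hb := contra _ _ h (![-m,1,m-1], ![m,-1,1-m]) (![0,1,0], ![0,1,0])
        (by rw [Texp_ts]; exact mem_span_triple_right) (by rw [Texp_tn]; exact mem_span_triple_right)
      simp only [betaF, dotP_expand, Matrix.cons_val_zero, Matrix.cons_val_one, Matrix.head_cons,
        Matrix.cons_val_two, Matrix.tail_cons] at hb
      exact absurd (by linear_combination hb : (2:ZMod p) = 0) h2
  | false, none, true, none =>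
      have hb := contra _ _ h (![1,0,0], ![1,0,0]) (![-1,0,1], ![1,0,-1])
        (by rw [Texp_fn]; exact mem_span_triple_mid) (by rw [Texp_tn]; exact mem_span_triple_mid)
      simp only [betaF, dotP_expand, Matrix.cons_val_zero, Matrix.cons_val_one, Matrix.head_cons,
        Matrix.cons_val_two, Matrix.tail_cons] at hb
      exact absurd (by linear_combination -hb : (2:ZMod p) = 0) h2
  | true, none, false, none =>
      have hb := contra _ _ h (![-1,0,1], ![1,0,-1]) (![1,0,0], ![1,0,0])
        (by rw [Texp_tn]; exact mem_span_triple_mid) (by rw [Texp_fn]; exact mem_span_triple_mid)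
      simp only [betaF, dotP_expand, Matrix.cons_val_zero, Matrix.cons_val_one, Matrix.head_cons,
        Matrix.cons_val_two, Matrix.tail_cons] at hb
      exact absurd (by linear_combination -hb : (2:ZMod p) = 0) h2
  | false, none, true, some m =>
      have hb := contra _ _ h (![0,1,0], ![0,1,0]) (![-m,1,m-1], ![m,-1,1-m])
        (by rw [Texp_fn]; exact mem_span_triple_right) (by rw [Texp_ts]; exact mem_span_triple_right)
      simp only [betaF, dotP_expand, Matrix.cons_val_zero, Matrix.cons_val_one, Matrix.head_cons,
        Matrix.cons_val_two, Matrix.tail_cons] at hb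
      exact absurd (by linear_combination hb : (2:ZMod p) = 0) h2
  | true, some m, false, none =>
      have hb := contra _ _ h (![-m,1,m-1], ![m,-1,1-m]) (![0,1,0], ![0,1,0])
        (by rw [Texp_ts]; exact mem_span_triple_right) (by rw [Texp_fn]; exact mem_span_triple_right)
      simp only [betaF, dotP_expand, Matrix.cons_val_zero, Matrix.cons_val_one, Matrix.head_cons,
        Matrix.cons_val_two, Matrix.tail_cons] at hb
      exact absurd (by linear_combination hb : (2:ZMod p) = 0) h2
  | false, some m, true, none =>
      have hb := contra _ _ h (![m,1,-1], ![m,-1,1]) (![0,1,0], ![0,1,0])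
        (by rw [Texp_fs]; exact mem_span_triple_right) (by rw [Texp_tn]; exact mem_span_triple_right)
      simp only [betaF, dotP_expand, Matrix.cons_val_zero, Matrix.cons_val_one, Matrix.head_cons,
        Matrix.cons_val_two, Matrix.tail_cons] at hb
      exact absurd (by linear_combination hb : (2:ZMod p) = 0) h2
  | true, none, false, some m =>
      have hb := contra _ _ h (![0,1,0], ![0,1,0]) (![m,1,-1], ![m,-1,1])
        (by rw [Texp_tn]; exact mem_span_triple_right) (by rw [Texp_fs]; exact mem_span_triple_right)
      simp only [betaF, dotP_expand, Matrix.cons_val_zero, Matrix.cons_val_one, Matrix.head_cons,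
        Matrix.cons_val_two, Matrix.tail_cons] at hb
      exact absurd (by linear_combination hb : (2:ZMod p) = 0) h2
  | false, some m, true, some m' =>
      have hb := contra _ _ h (![-1,m,1], ![1,m,-1]) (![1,m',0], ![1,m',0])
        (by rw [Texp_fs]; exact mem_span_triple_mid) (by rw [Texp_ts]; exact mem_span_triple_mid)
      simp only [betaF, dotP_expand, Matrix.cons_val_zero, Matrix.cons_val_one, Matrix.head_cons,
        Matrix.cons_val_two, Matrix.tail_cons] at hb
      exact absurd (by linear_combination -hb : (2:ZMod p) = 0) h2
  | true, some m', false, some m =>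
      have hb := contra _ _ h (![1,m',0], ![1,m',0]) (![-1,m,1], ![1,m,-1])
        (by rw [Texp_ts]; exact mem_span_triple_mid) (by rw [Texp_fs]; exact mem_span_triple_mid)
      simp only [betaF, dotP_expand, Matrix.cons_val_zero, Matrix.cons_val_one, Matrix.head_cons,
        Matrix.cons_val_two, Matrix.tail_cons] at hb
      exact absurd (by linear_combination -hb : (2:ZMod p) = 0) h2

lemma coord_fst (a b : ZMod p) (v w : V6 p) (i : Fin 3) :
    (a • v + b • w).1 i = a * v.1 i + b * w.1 i := rfl
lemma coord_snd (a b : ZMod p) (v w : V6 p) (i : Fin 3) :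
    (a • v + b • w).2 i = a * v.2 i + b * w.2 i := rfl
lemma coord_sub_fst (v : V6 p) (s : ZMod p) (i : Fin 3) :
    (v - s • onesV p).1 i = v.1 i - s := by
  show v.1 i - s * 1 = v.1 i - s
  rw [mul_one]
lemma coord_sub_snd (v : V6 p) (s : ZMod p) (i : Fin 3) :
    (v - s • onesV p).2 i = v.2 i - s := by
  show v.2 i - s * 1 = v.2 i - s
  rw [mul_one]

lemma diag_case [Fact p.Prime] (hodd : p ≠ 2) {T : Submodule (ZMod p) (V6 p)}
    (h3 : Module.finrank (ZMod p) T = 3)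
    (hD : ∀ v ∈ T, v.1 = v.2) : Texp p (false, none) = T := by
  have hle : T ≤ Texp p (false, none) := by
    intro u hu
    have hu12 := hD u hu
    rw [Texp_fn]
    have hrep : u = u.1 2 • ((![1,1,1], ![1,1,1]) : V6 p) + (u.1 0 - u.1 2) • (![1,0,0], ![1,0,0])
        + (u.1 1 - u.1 2) • (![0,1,0], ![0,1,0]) := by
      refine Prod.ext (funext fun i => ?_) (funext fun i => ?_) <;> fin_cases i <;>
        simp [Matrix.cons_val_zero, Matrix.cons_val_one, Matrix.head_cons,
          Matrix.cons_val_two, Matrix.tail_cons, ← hu12] <;> ring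
    rw [hrep]
    exact add_mem (add_mem (Submodule.smul_mem _ _ mem_span_triple_left)
      (Submodule.smul_mem _ _ mem_span_triple_mid))
      (Submodule.smul_mem _ _ mem_span_triple_right)
  exact (Submodule.eq_of_le_of_finrank_le hle
    (by rw [Texp_fn, finrank_span_three li_even_star, h3])).symm

set_option maxHeartbeats 1000000 in
lemma classify [Fact p.Prime] (hodd : p ≠ 2) {T : Submodule (ZMod p) (V6 p)}
    (hT : T ∈ Sigma3 p) : ∃ i, Texp p i = T := by
  obtain ⟨h3, hiso, hone⟩ := hT
  have h2 : (2 : ZMod p) ≠ 0 := two_ne hodd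
  by_cases hD : ∀ v ∈ T, v.1 = v.2
  · exact ⟨(false, none), diag_case hodd h3 hD⟩
  push_neg at hD
  obtain ⟨v, hv, hvne⟩ := hD
  -- the difference vector c of v
  have csum : (v.1 0 - v.2 0) + (v.1 1 - v.2 1) + (v.1 2 - v.2 2) = 0 := by
    have := hiso v hv (onesV p) hone
    simp only [betaF, dotP_expand, onesV] at this
    linear_combination this
  have hcne : ¬((v.1 0 - v.2 0 = 0) ∧ (v.1 1 - v.2 1 = 0)) := by
    rintro ⟨hc0, hc1⟩
    apply hvne
    have hc2 : v.1 2 - v.2 2 = 0 := by linear_combination csum - hc0 - hc1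
    funext i
    fin_cases i <;>
      [exact sub_eq_zero.mp hc0; exact sub_eq_zero.mp hc1; exact sub_eq_zero.mp hc2]
  by_cases hA : ∀ w ∈ T, ∃ lam : ZMod p,
      (w.1 0 - w.2 0 = lam * (v.1 0 - v.2 0)) ∧ (w.1 1 - w.2 1 = lam * (v.1 1 - v.2 1)) ∧
      (w.1 2 - w.2 2 = lam * (v.1 2 - v.2 2))
  · -- ODD case
    have ha : ∀ w ∈ T,
        (v.1 0 - v.2 0) * (w.1 0 + w.2 0) + (v.1 1 - v.2 1) * (w.1 1 + w.2 1) +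
          (v.1 2 - v.2 2) * (w.1 2 + w.2 2) = 0 := by
      intro w hw
      obtain ⟨lam, e0, e1, e2⟩ := hA w hw
      rcases eq_or_ne lam 0 with hl | hl
      · subst hl
        have hb := hiso v hv w hw
        simp only [betaF, dotP_expand] at hb
        linear_combination 2 * hb - (v.1 0 + v.2 0) * e0 - (v.1 1 + v.2 1) * e1
          - (v.1 2 + v.2 2) * e2
      · have hww := hiso w hw w hw
        simp only [betaF, dotP_expand] at hww
        have key : lam * ((v.1 0 - v.2 0) * (w.1 0 + w.2 0) + (v.1 1 - v.2 1) * (w.1 1 + w.2 1) +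
            (v.1 2 - v.2 2) * (w.1 2 + w.2 2)) = 0 := by
          linear_combination hww - (w.1 0 + w.2 0) * e0 - (w.1 1 + w.2 1) * e1
            - (w.1 2 + w.2 2) * e2
        exact (mul_eq_zero.mp key).resolve_left hl
    rcases eq_or_ne (v.1 1 - v.2 1) 0 with hc1 | hc1
    · -- odd star :  c = (c0, 0, -c0), c0 ≠ 0
      have hc0 : v.1 0 - v.2 0 ≠ 0 := fun h0 => hcne ⟨h0, hc1⟩
      refine ⟨(true, none), ?_⟩
      have hg2 : ((![-1,0,1], ![1,0,-1]) : V6 p) ∈ T := by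
        apply mem_of_perp h3 hiso
        intro w hw
        have haw := ha w hw
        simp only [betaF, dotP_expand, Matrix.cons_val_zero, Matrix.cons_val_one,
          Matrix.head_cons, Matrix.cons_val_two, Matrix.tail_cons]
        have key : (v.1 0 - v.2 0) * (w.1 0 * (-1) + w.1 1 * 0 + w.1 2 * 1 -
            (w.2 0 * 1 + w.2 1 * 0 + w.2 2 * (-1))) = 0 := by
          linear_combination -haw + (w.1 1 + w.2 1) * hc1 + (w.1 2 + w.2 2) * csum
            - (w.1 2 + w.2 2) * hc1
        exact (mul_eq_zero.mp key).resolve_left hc0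
      have hg3 : ((![0,1,0], ![0,1,0]) : V6 p) ∈ T := by
        apply mem_of_perp h3 hiso
        intro w hw
        obtain ⟨lam, e0, e1, e2⟩ := hA w hw
        simp only [betaF, dotP_expand, Matrix.cons_val_zero, Matrix.cons_val_one,
          Matrix.head_cons, Matrix.cons_val_two, Matrix.tail_cons]
        linear_combination e1 + lam * hc1
      have hle : Texp p (true, none) ≤ T := by
        rw [Texp_tn, Submodule.span_le]
        intro x hx
        simp only [Set.mem_insert_iff, Set.mem_singleton_iff] at hx
        rcases hx with rfl | rfl | rfl
        · exact onesV_eq (p := p) ▸ hone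
        · exact hg2
        · exact hg3
      exact Submodule.eq_of_le_of_finrank_le hle
        (by rw [h3, Texp_tn, finrank_span_three (li_odd_star hodd)])
    · -- odd some m : c1 ≠ 0
      set m : ZMod p := -((v.1 0 - v.2 0) * (v.1 1 - v.2 1)⁻¹) with hmdef
      have hm : m * (v.1 1 - v.2 1) = -(v.1 0 - v.2 0) := by
        rw [hmdef]
        field_simp
      have hc2 : (v.1 2 - v.2 2) = (m - 1) * (v.1 1 - v.2 1) := by
        linear_combination csum - hm
      refine ⟨(true, some m), ?_⟩
      have hg2 : ((![1,m,0], ![1,m,0]) : V6 p) ∈ T := by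
        apply mem_of_perp h3 hiso
        intro w hw
        obtain ⟨lam, e0, e1, e2⟩ := hA w hw
        simp only [betaF, dotP_expand, Matrix.cons_val_zero, Matrix.cons_val_one,
          Matrix.head_cons, Matrix.cons_val_two, Matrix.tail_cons]
        linear_combination e0 + m * e1 + lam * hm
      have hg3 : ((![-m,1,m-1], ![m,-1,1-m]) : V6 p) ∈ T := by
        apply mem_of_perp h3 hiso
        intro w hw
        have haw := ha w hw
        simp only [betaF, dotP_expand, Matrix.cons_val_zero, Matrix.cons_val_one,
          Matrix.head_cons, Matrix.cons_val_two, Matrix.tail_cons]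
        have key : (v.1 1 - v.2 1) * (w.1 0 * (-m) + w.1 1 * 1 + w.1 2 * (m - 1) -
            (w.2 0 * m + w.2 1 * (-1) + w.2 2 * (1 - m))) = 0 := by
          linear_combination haw - (w.1 0 + w.2 0) * hm - (w.1 2 + w.2 2) * hc2
        exact (mul_eq_zero.mp key).resolve_left hc1
      have hle : Texp p (true, some m) ≤ T := by
        rw [Texp_ts, Submodule.span_le]
        intro x hx
        simp only [Set.mem_insert_iff, Set.mem_singleton_iff] at hx
        rcases hx with rfl | rfl | rfl
        · exact onesV_eq (p := p) ▸ hone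
        · exact hg2
        · exact hg3
      exact Submodule.eq_of_le_of_finrank_le hle
        (by rw [h3, Texp_ts, finrank_span_three (li_odd hodd m)])
  · -- EVEN case
    push_neg at hA
    obtain ⟨w, hw, hnl⟩ := hA
    have dsum : (w.1 0 - w.2 0) + (w.1 1 - w.2 1) + (w.1 2 - w.2 2) = 0 := by
      have := hiso w hw (onesV p) hone
      simp only [betaF, dotP_expand, onesV] at this
      linear_combination this
    have hD2 : (v.1 0 - v.2 0) * (w.1 1 - w.2 1) - (v.1 1 - v.2 1) * (w.1 0 - w.2 0) ≠ 0 := by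
      intro hz
      have hvals : ∃ lam : ZMod p, (w.1 0 - w.2 0 = lam * (v.1 0 - v.2 0)) ∧
          (w.1 1 - w.2 1 = lam * (v.1 1 - v.2 1)) ∧
          (w.1 2 - w.2 2 = lam * (v.1 2 - v.2 2)) := by
        rcases eq_or_ne (v.1 0 - v.2 0) 0 with hc0 | hc0
        · have hc1 : v.1 1 - v.2 1 ≠ 0 := fun h1 => hcne ⟨hc0, h1⟩
          have hinv : (v.1 1 - v.2 1) * (v.1 1 - v.2 1)⁻¹ = 1 := mul_inv_cancel₀ hc1
          refine ⟨(w.1 1 - w.2 1) * (v.1 1 - v.2 1)⁻¹, ?_, ?_, ?_⟩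
          · have hd0m : (v.1 1 - v.2 1) * (w.1 0 - w.2 0) = 0 := by
              linear_combination -hz + (w.1 1 - w.2 1) * hc0
            have hd0 := (mul_eq_zero.mp hd0m).resolve_left hc1
            rw [hd0, hc0]; ring
          · linear_combination (-(w.1 1 - w.2 1)) * hinv
          · have hd0m : (v.1 1 - v.2 1) * (w.1 0 - w.2 0) = 0 := by
              linear_combination -hz + (w.1 1 - w.2 1) * hc0
            have hd0 := (mul_eq_zero.mp hd0m).resolve_left hc1
            linear_combination dsum - hd0 - ((w.1 1 - w.2 1) * (v.1 1 - v.2 1)⁻¹) * csum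
              + (w.1 1 - w.2 1) * hinv + ((w.1 1 - w.2 1) * (v.1 1 - v.2 1)⁻¹) * hc0
        · have hinv : (v.1 0 - v.2 0) * (v.1 0 - v.2 0)⁻¹ = 1 := mul_inv_cancel₀ hc0
          refine ⟨(w.1 0 - w.2 0) * (v.1 0 - v.2 0)⁻¹, ?_, ?_, ?_⟩
          · linear_combination (-(w.1 0 - w.2 0)) * hinv
          · have key : (v.1 0 - v.2 0) * ((w.1 1 - w.2 1) -
                (w.1 0 - w.2 0) * (v.1 0 - v.2 0)⁻¹ * (v.1 1 - v.2 1)) = 0 := by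
              linear_combination hz - ((w.1 0 - w.2 0) * (v.1 1 - v.2 1)) * hinv
            have := (mul_eq_zero.mp key).resolve_left hc0
            linear_combination this
          · have key : (v.1 0 - v.2 0) * ((w.1 2 - w.2 2) -
                (w.1 0 - w.2 0) * (v.1 0 - v.2 0)⁻¹ * (v.1 2 - v.2 2)) = 0 := by
              linear_combination -hz - ((w.1 0 - w.2 0) * (v.1 2 - v.2 2)) * hinv
                + (v.1 0 - v.2 0) * dsum - (w.1 0 - w.2 0) * csum
            have := (mul_eq_zero.mp key).resolve_left hc0
            linear_combination this
      obtain ⟨lam, f0, f1, f2⟩ := hvals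
      exact hnl lam f0 f1 f2
    have hDinv : ((v.1 0 - v.2 0) * (w.1 1 - w.2 1) - (v.1 1 - v.2 1) * (w.1 0 - w.2 0)) *
        ((v.1 0 - v.2 0) * (w.1 1 - w.2 1) - (v.1 1 - v.2 1) * (w.1 0 - w.2 0))⁻¹ = 1 :=
      mul_inv_cancel₀ hD2
    -- build v2 with difference (-2, 0, 2)
    obtain ⟨v2, hv2T, hb20, hb21, hb22⟩ : ∃ v2 ∈ T, v2.1 0 - v2.2 0 = -2 ∧
        v2.1 1 - v2.2 1 = 0 ∧ v2.1 2 - v2.2 2 = 2 := by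
      refine ⟨(-2 * (w.1 1 - w.2 1) *
          ((v.1 0 - v.2 0) * (w.1 1 - w.2 1) - (v.1 1 - v.2 1) * (w.1 0 - w.2 0))⁻¹) • v +
        (2 * (v.1 1 - v.2 1) *
          ((v.1 0 - v.2 0) * (w.1 1 - w.2 1) - (v.1 1 - v.2 1) * (w.1 0 - w.2 0))⁻¹) • w,
        add_mem (Submodule.smul_mem _ _ hv) (Submodule.smul_mem _ _ hw), ?_, ?_, ?_⟩ <;>
        rw [coord_fst, coord_snd]
      · linear_combination (-2 : ZMod p) * hDinv
      · ring
      · linear_combination (-2 * (w.1 1 - w.2 1) *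
            ((v.1 0 - v.2 0) * (w.1 1 - w.2 1) - (v.1 1 - v.2 1) * (w.1 0 - w.2 0))⁻¹) * csum
          + (2 * (v.1 1 - v.2 1) *
            ((v.1 0 - v.2 0) * (w.1 1 - w.2 1) - (v.1 1 - v.2 1) * (w.1 0 - w.2 0))⁻¹) * dsum
          + 2 * hDinv
    -- build v3 with difference (0, 2, -2)
    obtain ⟨v3, hv3T, hb30, hb31, hb32⟩ : ∃ v3 ∈ T, v3.1 0 - v3.2 0 = 0 ∧
        v3.1 1 - v3.2 1 = 2 ∧ v3.1 2 - v3.2 2 = -2 := by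
      refine ⟨(-2 * (w.1 0 - w.2 0) *
          ((v.1 0 - v.2 0) * (w.1 1 - w.2 1) - (v.1 1 - v.2 1) * (w.1 0 - w.2 0))⁻¹) • v +
        (2 * (v.1 0 - v.2 0) *
          ((v.1 0 - v.2 0) * (w.1 1 - w.2 1) - (v.1 1 - v.2 1) * (w.1 0 - w.2 0))⁻¹) • w,
        add_mem (Submodule.smul_mem _ _ hv) (Submodule.smul_mem _ _ hw), ?_, ?_, ?_⟩ <;>
        rw [coord_fst, coord_snd]
      · ring
      · linear_combination (2 : ZMod p) * hDinv
      · linear_combination (-2 * (w.1 0 - w.2 0) *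
            ((v.1 0 - v.2 0) * (w.1 1 - w.2 1) - (v.1 1 - v.2 1) * (w.1 0 - w.2 0))⁻¹) * csum
          + (2 * (v.1 0 - v.2 0) *
            ((v.1 0 - v.2 0) * (w.1 1 - w.2 1) - (v.1 1 - v.2 1) * (w.1 0 - w.2 0))⁻¹) * dsum
          - 2 * hDinv
    -- isotropy consequences
    have hww2 := hiso v2 hv2T v2 hv2T
    simp only [betaF, dotP_expand] at hww2
    have x2eq : v2.1 2 = v2.1 0 + 2 := by
      have key : (2 : ZMod p) * ((2 : ZMod p) * (v2.1 2 - v2.1 0 - 2)) = 0 := by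
        linear_combination hww2 - (v2.1 0 + v2.2 0 + 2) * hb20 - (v2.1 1 + v2.2 1) * hb21
          - (v2.1 2 + v2.2 2 - 2) * hb22
      have := (mul_eq_zero.mp ((mul_eq_zero.mp key).resolve_left h2)).resolve_left h2
      linear_combination this
    have hww3 := hiso v3 hv3T v3 hv3T
    simp only [betaF, dotP_expand] at hww3
    have x2eq' : v3.1 2 = v3.1 1 - 2 := by
      have key : (2 : ZMod p) * ((2 : ZMod p) * (v3.1 1 - v3.1 2 - 2)) = 0 := by
        linear_combination hww3 - (v3.1 0 + v3.2 0) * hb30 - (v3.1 1 + v3.2 1 - 2) * hb31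
          - (v3.1 2 + v3.2 2 + 2) * hb32
      have := (mul_eq_zero.mp ((mul_eq_zero.mp key).resolve_left h2)).resolve_left h2
      linear_combination -this
    have hcross := hiso v2 hv2T v3 hv3T
    simp only [betaF, dotP_expand] at hcross
    have x0eq : v3.1 0 = v2.1 1 - v2.1 0 + v3.1 2 := by
      have key : (2 : ZMod p) * (v3.1 0 - (v2.1 1 - v2.1 0 + v3.1 2)) = 0 := by
        linear_combination -hcross + v3.2 0 * hb20 + v3.2 1 * hb21 + v3.2 2 * hb22
          + (v2.1 0 + 2) * hb30 + v2.1 1 * hb31 + (v2.1 2 - 2) * hb32 - 2 * x2eq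
      have := (mul_eq_zero.mp key).resolve_left h2
      linear_combination this
    -- the two generators
    have hg2T : v2 - (v2.1 0 + 1) • onesV p ∈ T :=
      sub_mem hv2T (Submodule.smul_mem _ _ hone)
    have hg3T : v3 - (v3.1 1 - 1) • onesV p ∈ T :=
      sub_mem hv3T (Submodule.smul_mem _ _ hone)
    have hg2eq : v2 - (v2.1 0 + 1) • onesV p =
        ((![-1, v2.1 1 - v2.1 0 - 1, 1], ![1, v2.1 1 - v2.1 0 - 1, -1]) : V6 p) := by
      refine Prod.ext (funext fun i => ?_) (funext fun i => ?_) <;> fin_cases i <;>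
        simp only [Fin.zero_eta, Fin.mk_one, Fin.reduceFinMk, Prod.fst_sub, Prod.snd_sub,
          Pi.sub_apply, Prod.smul_fst, Prod.smul_snd, Pi.smul_apply, smul_eq_mul, onesV,
          mul_one, Matrix.cons_val_zero, Matrix.cons_val_one, Matrix.head_cons,
          Matrix.cons_val_two, Matrix.tail_cons]
      · ring
      · ring
      · linear_combination x2eq
      · linear_combination -hb20
      · linear_combination -hb21
      · linear_combination x2eq - hb22
    have hg3eq : v3 - (v3.1 1 - 1) • onesV p =
        ((![v2.1 1 - v2.1 0 - 1, 1, -1], ![v2.1 1 - v2.1 0 - 1, -1, 1]) : V6 p) := by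
      refine Prod.ext (funext fun i => ?_) (funext fun i => ?_) <;> fin_cases i <;>
        simp only [Fin.zero_eta, Fin.mk_one, Fin.reduceFinMk, Prod.fst_sub, Prod.snd_sub,
          Pi.sub_apply, Prod.smul_fst, Prod.smul_snd, Pi.smul_apply, smul_eq_mul, onesV,
          mul_one, Matrix.cons_val_zero, Matrix.cons_val_one, Matrix.head_cons,
          Matrix.cons_val_two, Matrix.tail_cons]
      · linear_combination x0eq + x2eq'
      · ring
      · linear_combination x2eq'
      · linear_combination x0eq + x2eq' - hb30
      · linear_combination -hb31
      · linear_combination x2eq' - hb32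
    refine ⟨(false, some (v2.1 1 - v2.1 0 - 1)), ?_⟩
    have hle : Texp p (false, some (v2.1 1 - v2.1 0 - 1)) ≤ T := by
      rw [Texp_fs, Submodule.span_le]
      intro x hx
      simp only [Set.mem_insert_iff, Set.mem_singleton_iff] at hx
      rcases hx with rfl | rfl | rfl
      · exact onesV_eq (p := p) ▸ hone
      · exact hg2eq ▸ hg2T
      · exact hg3eq ▸ hg3T
    exact Submodule.eq_of_le_of_finrank_le hle
      (by rw [h3, Texp_fs, finrank_span_three (li_even hodd _)])

end Aux

/-- For `p` an odd prime, `Σ₃(p)` consists precisely of the `2p+2` pairwise distinct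
subspaces `T_{⋆,even}`, `T_{m,even}` (m ∈ ZMod p), `T_{⋆,odd}`, `T_{m,odd}` (m ∈ ZMod p). -/
theorem sigma3_eq_explicit (p : ℕ) [Fact p.Prime] (hodd : p ≠ 2) :
    Function.Injective (Texp p) ∧ Set.range (Texp p) = Sigma3 p ∧
      (Sigma3 p).ncard = 2 * p + 2 := by
  have hinj := Texp_inj (p := p) hodd
  have hrange : Set.range (Texp p) = Sigma3 p := by
    apply Set.eq_of_subset_of_subset
    · rintro _ ⟨i, rfl⟩
      exact Texp_mem_Sigma3 hodd i
    · intro T hT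
      obtain ⟨i, hi⟩ := classify hodd hT
      exact ⟨i, hi⟩
  refine ⟨hinj, hrange, ?_⟩
  haveI : NeZero p := ⟨(Fact.out : p.Prime).ne_zero⟩
  rw [← hrange, ← Nat.card_coe_set_eq, Nat.card_range_of_injective hinj,
    Nat.card_eq_fintype_card, Fintype.card_prod, Fintype.card_bool, Fintype.card_option,
    ZMod.card]
  ring
end

section
/- Let p be an odd prime and let T ≠ T' be two distinct elements of Σ₃(p). If exactly one of T, T' is even and the other is odd, then dim(T ∩ T') = 2. If both are even or both are odd, then dim(T ∩ T') = 1. -/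
/-- The even elements of `Σ₃(p)`: `T_{⋆,even}` and `T_{m,even}` for `m ∈ ZMod p`. -/
def IsEvenT (p : ℕ) (T : Submodule (ZMod p) (V6 p)) : Prop :=
  T = Submodule.span (ZMod p)
      {(![1,1,1], ![1,1,1]), (![1,0,0], ![1,0,0]), (![0,1,0], ![0,1,0])} ∨
  ∃ m : ZMod p, T = Submodule.span (ZMod p)
      {(![1,1,1], ![1,1,1]), (![-1,m,1], ![1,m,-1]), (![m,1,-1], ![m,-1,1])}

/-- The odd elements of `Σ₃(p)`: `T_{⋆,odd}` and `T_{m,odd}` for `m ∈ ZMod p`. -/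
def IsOddT (p : ℕ) (T : Submodule (ZMod p) (V6 p)) : Prop :=
  T = Submodule.span (ZMod p)
      {(![1,1,1], ![1,1,1]), (![-1,0,1], ![1,0,-1]), (![0,1,0], ![0,1,0])} ∨
  ∃ m : ZMod p, T = Submodule.span (ZMod p)
      {(![1,1,1], ![1,1,1]), (![1,m,0], ![1,m,0]), (![-m,1,m-1], ![m,-1,1-m])}

/- ### Auxiliary lemmas -/

lemma mem_span_triple' {p : ℕ} [Fact p.Prime] {a b c x : V6 p} :
    x ∈ Submodule.span (ZMod p) {a, b, c} ↔ ∃ α β γ : ZMod p, α • a + β • b + γ • c = x := by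
  constructor
  · intro h
    rw [show ({a, b, c} : Set (V6 p)) = insert a {b, c} from rfl,
      Submodule.mem_span_insert] at h
    obtain ⟨α, z, hz, rfl⟩ := h
    obtain ⟨β, γ, rfl⟩ := Submodule.mem_span_pair.1 hz
    exact ⟨α, β, γ, add_assoc _ _ _⟩
  · rintro ⟨α, β, γ, rfl⟩
    refine Submodule.add_mem _ (Submodule.add_mem _ ?_ ?_) ?_ <;>
      exact Submodule.smul_mem _ _ (Submodule.subset_span (by simp))

lemma ones_eq (p : ℕ) [Fact p.Prime] : ((![1,1,1], ![1,1,1]) : V6 p) = onesV p := by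
  refine Prod.ext ?_ ?_ <;> funext i <;> fin_cases i <;> rfl

lemma ones_ne_zero (p : ℕ) [Fact p.Prime] : onesV p ≠ 0 :=
  fun h => one_ne_zero (congrFun (congrArg Prod.fst h) 0)

lemma zmod_two_ne_zero (p : ℕ) [Fact p.Prime] (hodd : p ≠ 2) : (2 : ZMod p) ≠ 0 := by
  have hp : p.Prime := Fact.out
  intro h
  have h2 : ((2 : ℕ) : ZMod p) = 0 := by exact_mod_cast h
  rw [ZMod.natCast_eq_zero_iff] at h2
  exact hodd ((Nat.prime_dvd_prime_iff_eq hp Nat.prime_two).1 h2)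

/- ### Dimension glue lemmas -/

lemma finrank_inter_le_two {p : ℕ} [Fact p.Prime] {T T' : Submodule (ZMod p) (V6 p)}
    (h3 : Module.finrank (ZMod p) T = 3) (h3' : Module.finrank (ZMod p) T' = 3)
    (hne : T ≠ T') : Module.finrank (ZMod p) ↥(T ⊓ T') ≤ 2 := by
  by_contra h
  push_neg at h
  have hle : Module.finrank (ZMod p) ↥(T ⊓ T') ≤ Module.finrank (ZMod p) T :=
    Submodule.finrank_mono inf_le_left
  rw [h3] at hle
  have heq : Module.finrank (ZMod p) ↥(T ⊓ T') = 3 := le_antisymm hle h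
  have hTT : T ⊓ T' = T := Submodule.eq_of_le_of_finrank_eq inf_le_left (heq.trans h3.symm)
  have hTT' : T ≤ T' := by rw [← hTT]; exact inf_le_right
  exact hne (Submodule.eq_of_le_of_finrank_eq hTT' (h3.trans h3'.symm))

lemma one_le_finrank_inter {p : ℕ} [Fact p.Prime] {S : Submodule (ZMod p) (V6 p)}
    (h1 : onesV p ∈ S) : 1 ≤ Module.finrank (ZMod p) S := by
  have hle : Submodule.span (ZMod p) {onesV p} ≤ S := Submodule.span_le.2 (by simpa)
  calc 1 = Module.finrank (ZMod p) (Submodule.span (ZMod p) {onesV p}) :=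
        (finrank_span_singleton (ones_ne_zero p)).symm
    _ ≤ _ := Submodule.finrank_mono hle

lemma finrank_le_one_of_le {p : ℕ} [Fact p.Prime] {S : Submodule (ZMod p) (V6 p)}
    (h : S ≤ Submodule.span (ZMod p) {onesV p}) : Module.finrank (ZMod p) S ≤ 1 :=
  (Submodule.finrank_mono h).trans_eq (finrank_span_singleton (ones_ne_zero p))

lemma two_le_finrank_of_indep {p : ℕ} [Fact p.Prime] {S : Submodule (ZMod p) (V6 p)}
    (h1 : onesV p ∈ S) {w : V6 p} (hw : w ∈ S)
    (hind : LinearIndependent (ZMod p) ![onesV p, w]) :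
    2 ≤ Module.finrank (ZMod p) S := by
  have hle : Submodule.span (ZMod p) (Set.range ![onesV p, w]) ≤ S := by
    rw [Submodule.span_le]
    rintro x ⟨i, rfl⟩
    fin_cases i <;> simpa
  calc 2 = Module.finrank (ZMod p) (Submodule.span (ZMod p) (Set.range ![onesV p, w])) := by
        rw [finrank_span_eq_card hind, Fintype.card_fin]
    _ ≤ _ := Submodule.finrank_mono hle

/- ### Core computations: both even or both odd gives intersection ≤ span{𝟙} -/

lemma EEsm {p : ℕ} [Fact p.Prime] (h2 : (2 : ZMod p) ≠ 0) (n : ZMod p) :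
    Submodule.span (ZMod p)
        {((![1,1,1], ![1,1,1]) : V6 p), (![1,0,0], ![1,0,0]), (![0,1,0], ![0,1,0])} ⊓
      Submodule.span (ZMod p)
        {((![1,1,1], ![1,1,1]) : V6 p), (![-1,n,1], ![1,n,-1]), (![n,1,-1], ![n,-1,1])} ≤
    Submodule.span (ZMod p) {onesV p} := by
  rintro v ⟨hv1, hv2⟩
  obtain ⟨α, β, γ, hv⟩ := mem_span_triple'.1 hv1
  obtain ⟨α', β', γ', hv'⟩ := mem_span_triple'.1 hv2
  have E := hv.trans hv'.symm
  have x0 := congrFun (congrArg Prod.fst E) 0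
  have x1 := congrFun (congrArg Prod.fst E) 1
  have y0 := congrFun (congrArg Prod.snd E) 0
  have y1 := congrFun (congrArg Prod.snd E) 1
  simp only [Prod.fst_add, Prod.snd_add, Prod.smul_fst, Prod.smul_snd, Pi.add_apply,
    Pi.smul_apply, smul_eq_mul, Matrix.cons_val_zero, Matrix.cons_val_one, Matrix.head_cons,
    Matrix.cons_val_two, Matrix.tail_cons] at x0 x1 y0 y1
  have hβ' : β' = 0 := mul_left_cancel₀ h2 (by linear_combination x0 - y0)
  have hγ' : γ' = 0 := mul_left_cancel₀ h2 (by linear_combination y1 - x1)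
  rw [Submodule.mem_span_singleton]
  exact ⟨α', by rw [← ones_eq, ← hv', hβ', hγ', zero_smul, zero_smul, add_zero, add_zero]⟩

lemma EEmm {p : ℕ} [Fact p.Prime] (h2 : (2 : ZMod p) ≠ 0) {m n : ZMod p} (hmn : m ≠ n) :
    Submodule.span (ZMod p)
        {((![1,1,1], ![1,1,1]) : V6 p), (![-1,m,1], ![1,m,-1]), (![m,1,-1], ![m,-1,1])} ⊓
      Submodule.span (ZMod p)
        {((![1,1,1], ![1,1,1]) : V6 p), (![-1,n,1], ![1,n,-1]), (![n,1,-1], ![n,-1,1])} ≤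
    Submodule.span (ZMod p) {onesV p} := by
  rintro v ⟨hv1, hv2⟩
  obtain ⟨α, β, γ, hv⟩ := mem_span_triple'.1 hv1
  obtain ⟨α', β', γ', hv'⟩ := mem_span_triple'.1 hv2
  have E := hv.trans hv'.symm
  have x0 := congrFun (congrArg Prod.fst E) 0
  have x1 := congrFun (congrArg Prod.fst E) 1
  have x2 := congrFun (congrArg Prod.fst E) 2
  have y0 := congrFun (congrArg Prod.snd E) 0
  have y1 := congrFun (congrArg Prod.snd E) 1
  have y2 := congrFun (congrArg Prod.snd E) 2
  simp only [Prod.fst_add, Prod.snd_add, Prod.smul_fst, Prod.smul_snd, Pi.add_apply,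
    Pi.smul_apply, smul_eq_mul, Matrix.cons_val_zero, Matrix.cons_val_one, Matrix.head_cons,
    Matrix.cons_val_two, Matrix.tail_cons] at x0 x1 x2 y0 y1 y2
  have hmn' : m - n ≠ 0 := sub_ne_zero.2 hmn
  have hββ : β = β' := mul_left_cancel₀ h2 (by linear_combination y0 - x0)
  have hγγ : γ = γ' := mul_left_cancel₀ h2 (by linear_combination x1 - y1)
  have hαα : α = α' := mul_left_cancel₀ h2 (by linear_combination x2 + y2)
  have hγ : γ = 0 := by
    apply mul_left_cancel₀ hmn'
    rw [mul_zero]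
    linear_combination x0 - hαα + hββ - n * hγγ
  have hβ : β = 0 := by
    apply mul_left_cancel₀ hmn'
    rw [mul_zero]
    linear_combination x1 - hαα - hγγ - n * hββ
  rw [Submodule.mem_span_singleton]
  exact ⟨α, by rw [← ones_eq, ← hv, hβ, hγ, zero_smul, zero_smul, add_zero, add_zero]⟩

lemma OOsm {p : ℕ} [Fact p.Prime] (h2 : (2 : ZMod p) ≠ 0) (n : ZMod p) :
    Submodule.span (ZMod p)
        {((![1,1,1], ![1,1,1]) : V6 p), (![-1,0,1], ![1,0,-1]), (![0,1,0], ![0,1,0])} ⊓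
      Submodule.span (ZMod p)
        {((![1,1,1], ![1,1,1]) : V6 p), (![1,n,0], ![1,n,0]), (![-n,1,n-1], ![n,-1,1-n])} ≤
    Submodule.span (ZMod p) {onesV p} := by
  rintro v ⟨hv1, hv2⟩
  obtain ⟨α, β, γ, hv⟩ := mem_span_triple'.1 hv1
  obtain ⟨α', β', γ', hv'⟩ := mem_span_triple'.1 hv2
  have E := hv.trans hv'.symm
  have x0 := congrFun (congrArg Prod.fst E) 0
  have x1 := congrFun (congrArg Prod.fst E) 1
  have x2 := congrFun (congrArg Prod.fst E) 2
  have y0 := congrFun (congrArg Prod.snd E) 0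
  have y1 := congrFun (congrArg Prod.snd E) 1
  simp only [Prod.fst_add, Prod.snd_add, Prod.smul_fst, Prod.smul_snd, Pi.add_apply,
    Pi.smul_apply, smul_eq_mul, Matrix.cons_val_zero, Matrix.cons_val_one, Matrix.head_cons,
    Matrix.cons_val_two, Matrix.tail_cons] at x0 x1 x2 y0 y1
  have hγ' : γ' = 0 := mul_left_cancel₀ h2 (by linear_combination y1 - x1)
  have hβ : β = 0 := mul_left_cancel₀ h2 (by linear_combination y0 - x0 + 2 * n * hγ')
  have hα : α = α' := by linear_combination x2 - hβ + (n - 1) * hγ'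
  have hβ' : β' = 0 := by linear_combination hα - x0 - hβ + n * hγ'
  have hγ : γ = 0 := by linear_combination x1 - hα + n * hβ' + hγ'
  rw [Submodule.mem_span_singleton]
  exact ⟨α, by rw [← ones_eq, ← hv, hβ, hγ, zero_smul, zero_smul, add_zero, add_zero]⟩

lemma OOmm {p : ℕ} [Fact p.Prime] (h2 : (2 : ZMod p) ≠ 0) {m n : ZMod p} (hmn : m ≠ n) :
    Submodule.span (ZMod p)
        {((![1,1,1], ![1,1,1]) : V6 p), (![1,m,0], ![1,m,0]), (![-m,1,m-1], ![m,-1,1-m])} ⊓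
      Submodule.span (ZMod p)
        {((![1,1,1], ![1,1,1]) : V6 p), (![1,n,0], ![1,n,0]), (![-n,1,n-1], ![n,-1,1-n])} ≤
    Submodule.span (ZMod p) {onesV p} := by
  rintro v ⟨hv1, hv2⟩
  obtain ⟨α, β, γ, hv⟩ := mem_span_triple'.1 hv1
  obtain ⟨α', β', γ', hv'⟩ := mem_span_triple'.1 hv2
  have E := hv.trans hv'.symm
  have x0 := congrFun (congrArg Prod.fst E) 0
  have x1 := congrFun (congrArg Prod.fst E) 1
  have x2 := congrFun (congrArg Prod.fst E) 2
  have y0 := congrFun (congrArg Prod.snd E) 0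
  have y1 := congrFun (congrArg Prod.snd E) 1
  have y2 := congrFun (congrArg Prod.snd E) 2
  simp only [Prod.fst_add, Prod.snd_add, Prod.smul_fst, Prod.smul_snd, Pi.add_apply,
    Pi.smul_apply, smul_eq_mul, Matrix.cons_val_zero, Matrix.cons_val_one, Matrix.head_cons,
    Matrix.cons_val_two, Matrix.tail_cons] at x0 x1 x2 y0 y1 y2
  have hmn' : m - n ≠ 0 := sub_ne_zero.2 hmn
  have hγγ : γ = γ' := mul_left_cancel₀ h2 (by linear_combination x1 - y1)
  have hγ : γ = 0 := by
    apply mul_left_cancel₀ (mul_ne_zero h2 hmn')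
    rw [mul_zero]
    linear_combination y0 - x0 - 2 * n * hγγ
  have hγ' : γ' = 0 := hγγ.symm.trans hγ
  have hαα : α = α' := mul_left_cancel₀ h2 (by linear_combination x2 + y2)
  have hββ : β = β' := by linear_combination x0 - hαα + m * hγ - n * hγ'
  have hβ : β = 0 := by
    apply mul_left_cancel₀ hmn'
    rw [mul_zero]
    linear_combination x1 - hαα - hγ + hγ' - n * hββ
  rw [Submodule.mem_span_singleton]
  exact ⟨α, by rw [← ones_eq, ← hv, hβ, hγ, zero_smul, zero_smul, add_zero, add_zero]⟩

/- ### Even-odd: a common vector independent of 𝟙 -/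

lemma exists_w_of_even_odd {p : ℕ} [Fact p.Prime] (h2 : (2 : ZMod p) ≠ 0)
    {T T' : Submodule (ZMod p) (V6 p)} (hE : IsEvenT p T) (hO : IsOddT p T') :
    ∃ w, w ∈ T ⊓ T' ∧ LinearIndependent (ZMod p) ![onesV p, w] := by
  rcases hE with rfl | ⟨m, rfl⟩ <;> rcases hO with rfl | ⟨n, rfl⟩
  · refine ⟨(![0,1,0], ![0,1,0]), ⟨?_, ?_⟩, ?_⟩
    · exact mem_span_triple'.2 ⟨0, 0, 1, by
        refine Prod.ext ?_ ?_ <;> funext i <;> fin_cases i <;> simp⟩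
    · exact mem_span_triple'.2 ⟨0, 0, 1, by
        refine Prod.ext ?_ ?_ <;> funext i <;> fin_cases i <;> simp⟩
    · rw [LinearIndependent.pair_iff]
      intro s t hst
      have e0 := congrFun (congrArg Prod.fst hst) 0
      have e1 := congrFun (congrArg Prod.fst hst) 1
      simp only [onesV, Prod.fst_add, Prod.smul_fst, Pi.add_apply, Pi.smul_apply,
        smul_eq_mul, Matrix.cons_val_zero, Matrix.cons_val_one, Matrix.head_cons,
        Prod.fst_zero, Pi.zero_apply] at e0 e1
      constructor
      · linear_combination e0
      · linear_combination e1 - e0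
  · refine ⟨(![1,n,0], ![1,n,0]), ⟨?_, ?_⟩, ?_⟩
    · exact mem_span_triple'.2 ⟨0, 1, n, by
        refine Prod.ext ?_ ?_ <;> funext i <;> fin_cases i <;> simp⟩
    · exact mem_span_triple'.2 ⟨0, 1, 0, by
        refine Prod.ext ?_ ?_ <;> funext i <;> fin_cases i <;> simp⟩
    · rw [LinearIndependent.pair_iff]
      intro s t hst
      have e0 := congrFun (congrArg Prod.fst hst) 0
      have e2 := congrFun (congrArg Prod.fst hst) 2
      simp only [onesV, Prod.fst_add, Prod.smul_fst, Pi.add_apply, Pi.smul_apply,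
        smul_eq_mul, Matrix.cons_val_zero, Matrix.cons_val_one, Matrix.head_cons,
        Matrix.cons_val_two, Matrix.tail_cons, Prod.fst_zero, Pi.zero_apply] at e0 e2
      constructor
      · linear_combination e2
      · linear_combination e0 - e2
  · refine ⟨(![-1,m,1], ![1,m,-1]), ⟨?_, ?_⟩, ?_⟩
    · exact mem_span_triple'.2 ⟨0, 1, 0, by
        refine Prod.ext ?_ ?_ <;> funext i <;> fin_cases i <;> simp⟩
    · exact mem_span_triple'.2 ⟨0, 1, m, by
        refine Prod.ext ?_ ?_ <;> funext i <;> fin_cases i <;> simp⟩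
    · rw [LinearIndependent.pair_iff]
      intro s t hst
      have e0 := congrFun (congrArg Prod.fst hst) 0
      have f0 := congrFun (congrArg Prod.snd hst) 0
      simp only [onesV, Prod.fst_add, Prod.snd_add, Prod.smul_fst, Prod.smul_snd,
        Pi.add_apply, Pi.smul_apply, smul_eq_mul, Matrix.cons_val_zero,
        Prod.fst_zero, Prod.snd_zero, Pi.zero_apply] at e0 f0
      have hs : s = 0 := mul_left_cancel₀ h2 (by linear_combination e0 + f0)
      exact ⟨hs, by linear_combination f0 - hs⟩
  · refine ⟨(![m - n, m*n + 1, n - 1], ![m + n, m*n - 1, 1 - n]), ⟨?_, ?_⟩, ?_⟩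
    · exact mem_span_triple'.2 ⟨0, n, 1, by
        refine Prod.ext ?_ ?_ <;> funext i <;> fin_cases i <;> simp <;> ring⟩
    · exact mem_span_triple'.2 ⟨0, m, 1, by
        refine Prod.ext ?_ ?_ <;> funext i <;> fin_cases i <;> simp <;> ring⟩
    · rw [LinearIndependent.pair_iff]
      intro s t hst
      have e1 := congrFun (congrArg Prod.fst hst) 1
      have f1 := congrFun (congrArg Prod.snd hst) 1
      simp only [onesV, Prod.fst_add, Prod.snd_add, Prod.smul_fst, Prod.smul_snd,
        Pi.add_apply, Pi.smul_apply, smul_eq_mul, Matrix.cons_val_one, Matrix.head_cons,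
        Prod.fst_zero, Prod.snd_zero, Pi.zero_apply, Matrix.cons_val_zero] at e1 f1
      have ht : t = 0 := mul_left_cancel₀ h2 (by linear_combination e1 - f1)
      exact ⟨by linear_combination e1 - (m*n + 1) * ht, ht⟩

/- ### Main theorem -/

/-- For an odd prime `p` and distinct `T ≠ T'` in `Σ₃(p)`: if exactly one of them is even
and the other odd, then `dim (T ∩ T') = 2`; if both are even or both are odd, then
`dim (T ∩ T') = 1`. -/
theorem dim_inter_of_ne (p : ℕ) [Fact p.Prime] (hodd : p ≠ 2)
    (T T' : Submodule (ZMod p) (V6 p)) (hT : T ∈ Sigma3 p) (hT' : T' ∈ Sigma3 p)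
    (hne : T ≠ T') :
    (((IsEvenT p T ∧ IsOddT p T') ∨ (IsOddT p T ∧ IsEvenT p T')) →
        Module.finrank (ZMod p) ↥(T ⊓ T') = 2) ∧
    (((IsEvenT p T ∧ IsEvenT p T') ∨ (IsOddT p T ∧ IsOddT p T')) →
        Module.finrank (ZMod p) ↥(T ⊓ T') = 1) := by
  obtain ⟨h3, -, hT1⟩ := hT
  obtain ⟨h3', -, hT1'⟩ := hT'
  have h2 : (2 : ZMod p) ≠ 0 := zmod_two_ne_zero p hodd
  have hmemboth : onesV p ∈ T ⊓ T' := Submodule.mem_inf.2 ⟨hT1, hT1'⟩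
  constructor
  · rintro (⟨hE, hO⟩ | ⟨hO, hE⟩)
    · obtain ⟨w, hw, hind⟩ := exists_w_of_even_odd h2 hE hO
      exact le_antisymm (finrank_inter_le_two h3 h3' hne)
        (two_le_finrank_of_indep hmemboth hw hind)
    · obtain ⟨w, hw, hind⟩ := exists_w_of_even_odd h2 hE hO
      rw [inf_comm] at hmemboth ⊢
      exact le_antisymm (finrank_inter_le_two h3' h3 hne.symm)
        (two_le_finrank_of_indep hmemboth hw hind)
  · have main : ((IsEvenT p T ∧ IsEvenT p T') ∨ (IsOddT p T ∧ IsOddT p T')) →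
        T ⊓ T' ≤ Submodule.span (ZMod p) {onesV p} := by
      rintro (⟨hE, hE'⟩ | ⟨hO, hO'⟩)
      · rcases hE with rfl | ⟨m, rfl⟩ <;> rcases hE' with h' | ⟨n, h'⟩
        · exact absurd h'.symm hne
        · subst h'; exact EEsm h2 n
        · subst h'; rw [inf_comm]; exact EEsm h2 m
        · subst h'
          have hmn : m ≠ n := by rintro rfl; exact hne rfl
          exact EEmm h2 hmn
      · rcases hO with rfl | ⟨m, rfl⟩ <;> rcases hO' with h' | ⟨n, h'⟩
        · exact absurd h'.symm hne
        · subst h'; exact OOsm h2 n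
        · subst h'; rw [inf_comm]; exact OOsm h2 m
        · subst h'
          have hmn : m ≠ n := by rintro rfl; exact hne rfl
          exact OOmm h2 hmn
    intro h
    exact le_antisymm (finrank_le_one_of_le (main h)) (one_le_finrank_inter hmemboth)
end

section
/- Let p be a prime, N ≥ 1, and T, T' ∈ Σ₃(p). Then trace(R_N(T) · R_N(T')†) = p^(N · dim(T ∩ T')) as complex numbers, where dim(T ∩ T') is the dimension of T ∩ T' as a subspace over ZMod p. -/
open Classical in
/-- The matrix `R_N(T)`, the `N`-fold Kronecker power of the 0/1 matrix `r(T)`: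
`R_N(T)_{x,y} = ∏_{k < N} [ (x k, y k) ∈ T ]`. -/
noncomputable def RN (p N : ℕ) (T : Submodule (ZMod p) (V6 p)) :
    Matrix (Fin N → Fin 3 → ZMod p) (Fin N → Fin 3 → ZMod p) ℂ :=
  fun x y => ∏ k : Fin N, if ((x k, y k) : V6 p) ∈ T then 1 else 0

open Matrix in
/-- `trace (R_N(T) R_N(T')†) = p^(N · dim (T ∩ T'))`. -/
theorem trace_RN_mul_RN_conjTranspose (p N : ℕ) [Fact p.Prime] (hN : 1 ≤ N)
    (T T' : Submodule (ZMod p) (V6 p)) (hT : T ∈ Sigma3 p) (hT' : T' ∈ Sigma3 p) :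
    Matrix.trace (RN p N T * (RN p N T')ᴴ) =
      (p : ℂ) ^ (N * Module.finrank (ZMod p) ↥(T ⊓ T')) := by
  classical
  have h1 : Matrix.trace (RN p N T * (RN p N T')ᴴ)
      = ∑ x : Fin N → Fin 3 → ZMod p, ∑ y : Fin N → Fin 3 → ZMod p,
          ∏ k : Fin N, (if ((x k, y k) : V6 p) ∈ T ⊓ T' then (1:ℂ) else 0) := by
    simp only [Matrix.trace, Matrix.diag, Matrix.mul_apply, Matrix.conjTranspose_apply, RN]
    refine Finset.sum_congr rfl fun x _ => Finset.sum_congr rfl fun y _ => ?_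
    rw [star_prod, ← Finset.prod_mul_distrib]
    refine Finset.prod_congr rfl fun k _ => ?_
    by_cases hA : ((x k, y k) : V6 p) ∈ T <;> by_cases hB : ((x k, y k) : V6 p) ∈ T' <;>
      simp [hA, hB, Submodule.mem_inf]
  rw [h1, ← Fintype.sum_prod_type']
  have heq := Fintype.sum_equiv (Equiv.arrowProdEquivProdArrow (Fin N) (fun _ => Fin 3 → ZMod p) (fun _ => Fin 3 → ZMod p))
      (fun f : Fin N → V6 p => ∏ k : Fin N, (if (f k) ∈ T ⊓ T' then (1:ℂ) else 0))
      (fun q => ∏ k : Fin N, (if ((q.1 k, q.2 k) : V6 p) ∈ T ⊓ T' then (1:ℂ) else 0))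
      (fun f => rfl)
  rw [← heq]
  calc (∑ f : Fin N → V6 p, ∏ k : Fin N, (if (f k) ∈ T ⊓ T' then (1:ℂ) else 0))
      = ∏ k : Fin N, ∑ v : V6 p, (if v ∈ T ⊓ T' then (1:ℂ) else 0) := by
        rw [Finset.prod_univ_sum, Fintype.piFinset_univ]
    _ = (p : ℂ) ^ (N * Module.finrank (ZMod p) ↥(T ⊓ T')) := by
        rw [Finset.sum_boole]
        have hc : (Finset.univ.filter (fun v : V6 p => v ∈ T ⊓ T')).card
            = Fintype.card ↥(T ⊓ T') := (Fintype.card_subtype _).symm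
        rw [hc, Module.card_eq_pow_finrank (K := ZMod p) (V := ↥(T ⊓ T')), ZMod.card]
        push_cast
        rw [Finset.prod_const, Finset.card_univ, Fintype.card_fin, ← pow_mul, Nat.mul_comm]
end

section
/- Let p be a prime and a, b, c, g : ℕ. Then trace((ρ_AB^{T_B})³) = p^(−2(a+b+c+g)), where ρ_AB^{T_B} is the partial transpose on B of the reduced density matrix on AB of the normalized state consisting of c Bell pairs between A and B, b Bell pairs between A and C, a Bell pairs between B and C, and g GHZ triples shared among A, B, C. -/
/-- Index type for subsystem `A`: `c` Bell-pair slots with `B`, `b` Bell-pair slots with `C`,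
`g` GHZ slots. -/
abbrev IA (p a b c g : ℕ) := (Fin c → ZMod p) × (Fin b → ZMod p) × (Fin g → ZMod p)

/-- Index type for subsystem `B`. -/
abbrev IB (p a b c g : ℕ) := (Fin c → ZMod p) × (Fin a → ZMod p) × (Fin g → ZMod p)

/-- Index type for subsystem `C`. -/
abbrev IC (p a b c g : ℕ) := (Fin b → ZMod p) × (Fin a → ZMod p) × (Fin g → ZMod p)

open Classical in
/-- The unnormalized state `(Φ⁺_AB)^{⊗c} ⊗ (Φ⁺_AC)^{⊗b} ⊗ (Φ⁺_BC)^{⊗a} ⊗ GHZ^{⊗g}` in the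
computational basis. -/
noncomputable def psiState (p a b c g : ℕ) :
    IA p a b c g × IB p a b c g × IC p a b c g → ℂ
  | ((u, v, w), (u', s, w'), (v', s', w'')) =>
      if u = u' ∧ v = v' ∧ s = s' ∧ w = w' ∧ w = w'' then 1 else 0

/-- The normalized tripartite density matrix `ρ`. -/
noncomputable def rhoState (p a b c g : ℕ) :
    Matrix (IA p a b c g × IB p a b c g × IC p a b c g)
      (IA p a b c g × IB p a b c g × IC p a b c g) ℂ :=
  fun X Y => ((p : ℂ) ^ (a + b + c + g))⁻¹ * psiState p a b c g X * psiState p a b c g Y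

/-- The reduced density matrix `ρ_AB` (partial trace over `C`). -/
noncomputable def rhoAB (p a b c g : ℕ) [NeZero p] :
    Matrix (IA p a b c g × IB p a b c g) (IA p a b c g × IB p a b c g) ℂ :=
  fun X Y => ∑ iC : IC p a b c g, rhoState p a b c g (X.1, X.2, iC) (Y.1, Y.2, iC)

/-- The partial transpose `ρ_AB^{T_B}` on subsystem `B`. -/
noncomputable def rhoTB (p a b c g : ℕ) [NeZero p] :
    Matrix (IA p a b c g × IB p a b c g) (IA p a b c g × IB p a b c g) ℂ :=
  fun X Y => rhoAB p a b c g (X.1, Y.2) (Y.1, X.2)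


open Classical in
lemma rhoTB_eq (p a b c g : ℕ) [NeZero p] (X Y : IA p a b c g × IB p a b c g) :
    rhoTB p a b c g X Y =
      if X.1.2.2 = X.2.2.2 ∧
          Y = ((X.2.1, X.1.2.1, X.1.2.2), (X.1.1, X.2.2.1, X.1.2.2)) then
        ((p : ℂ) ^ (a + b + c + g))⁻¹ else 0 := by
  obtain ⟨⟨u, v, w⟩, ⟨u', s, w'⟩⟩ := X
  obtain ⟨⟨tu, tv, tw⟩, ⟨tu', ts, tw'⟩⟩ := Y
  simp only [rhoTB, rhoAB, rhoState, psiState]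
  rw [Finset.sum_eq_single ((v, ts, w) : IC p a b c g)]
  · simp only [mul_ite, mul_one, mul_zero, ite_mul, zero_mul, Prod.mk.injEq, ← ite_and]
    refine if_congr ?_ rfl rfl
    constructor
    · rintro ⟨⟨h1, h2, h3, h4, h5⟩, h6, h7, h8, h9, h10⟩
      subst_vars; simp_all
    · rintro ⟨h1, ⟨h2, h3, h4⟩, h5, h6, h7⟩
      subst_vars; simp_all
  · intro iC _ hne
    obtain ⟨v0, s0, w0⟩ := iC
    simp only [mul_ite, mul_one, mul_zero, ite_mul, zero_mul, ← ite_and]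
    rw [if_neg]
    rintro ⟨⟨_, _, _, _, _⟩, _, h2, h3, _, h5⟩
    exact hne (by simp [← h2, ← h3, ← h5])
  · intro h; exact absurd (Finset.mem_univ _) h

lemma sum_ite_and_eq {α : Type*} [Fintype α] (x0 : α) (P : Prop) (v : ℂ)
    [dP : Decidable P] {D : ∀ x : α, Decidable (P ∧ x = x0)} :
    (∑ x : α, @ite _ (P ∧ x = x0) (D x) v 0) = if P then v else 0 := by
  rw [Finset.sum_eq_single x0]
  · by_cases hP : P
    · rw [if_pos ⟨hP, rfl⟩, if_pos hP]
    · rw [if_neg (fun h => hP h.1), if_neg hP]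
  · intro b _ hb; exact if_neg (fun h => hb h.2)
  · intro h; exact absurd (Finset.mem_univ _) h

lemma sum_ite_eq_simple {α : Type*} [Fintype α] (x0 : α) (v : ℂ)
    {D : ∀ x : α, Decidable (x = x0)} :
    (∑ x : α, @ite _ (x = x0) (D x) v 0) = v := by
  rw [Finset.sum_eq_single x0, if_pos rfl]
  · intro b _ hb; exact if_neg hb
  · intro h; exact absurd (Finset.mem_univ _) h

open Classical in
lemma rhoTB_sq (p a b c g : ℕ) [NeZero p] (X Z : IA p a b c g × IB p a b c g) :
    (rhoTB p a b c g * rhoTB p a b c g) X Z =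
      if X.1.2.2 = X.2.2.2 ∧ Z = X then (((p : ℂ) ^ (a + b + c + g))⁻¹) ^ 2 else 0 := by
  rw [Matrix.mul_apply]
  rw [Finset.sum_eq_single
    (((X.2.1, X.1.2.1, X.1.2.2), (X.1.1, X.2.2.1, X.1.2.2)) : IA p a b c g × IB p a b c g)]
  · rw [rhoTB_eq, rhoTB_eq]
    obtain ⟨⟨u, v, w⟩, ⟨u', s, w'⟩⟩ := X
    obtain ⟨⟨zu, zv, zw⟩, ⟨zu', zs, zw'⟩⟩ := Z
    simp only [Prod.mk.injEq]
    split_ifs <;> simp_all <;> ring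
  · intro Y _ hne
    rw [rhoTB_eq, if_neg, zero_mul]
    rintro ⟨_, h⟩; exact hne h
  · intro h; exact absurd (Finset.mem_univ _) h

set_option maxHeartbeats 1000000 in
open Classical in
/-- `tr ((ρ_AB^{T_B})³) = p^{-2(a+b+c+g)}`. -/
theorem trace_partial_transpose_cube (p : ℕ) (hp : p.Prime) [NeZero p] (a b c g : ℕ) :
    Matrix.trace (rhoTB p a b c g * rhoTB p a b c g * rhoTB p a b c g) = (p : ℂ) ^ (-(2 * (a + b + c + g) : ℤ)) := by
  classical
  set ν : ℂ := ((p : ℂ) ^ (a + b + c + g))⁻¹ with hν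
  have hp0 : (p : ℂ) ≠ 0 := Nat.cast_ne_zero.mpr hp.pos.ne'
  have htr : Matrix.trace (rhoTB p a b c g * rhoTB p a b c g * rhoTB p a b c g) =
      ∑ X : IA p a b c g × IB p a b c g, ∑ Z : IA p a b c g × IB p a b c g,
        (rhoTB p a b c g * rhoTB p a b c g) X Z * rhoTB p a b c g Z X := by
    simp [Matrix.trace, Matrix.mul_apply, Matrix.diag]
  rw [htr]
  have hXZ : ∀ X Z : IA p a b c g × IB p a b c g,
      (rhoTB p a b c g * rhoTB p a b c g) X Z * rhoTB p a b c g Z X =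
        if (X.2.1 = X.1.1 ∧ X.2.2.2 = X.1.2.2) ∧ Z = X then ν ^ 3 else 0 := by
    intro X Z
    rw [rhoTB_sq, rhoTB_eq]
    obtain ⟨⟨u, v, w⟩, ⟨u', s, w'⟩⟩ := X
    obtain ⟨⟨zu, zv, zw⟩, ⟨zu', zs, zw'⟩⟩ := Z
    simp only [Prod.mk.injEq]
    rw [ite_zero_mul_ite_zero]
    refine if_congr ⟨fun h => ?_, fun h => ?_⟩ (by ring) rfl
    · obtain ⟨⟨hww, ⟨e1, e2, e3⟩, e4, e5, e6⟩, f1, ⟨f2, f3, f4⟩, f5, f6, f7⟩ := h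
      subst_vars; simp_all
    · obtain ⟨⟨g1, g2⟩, ⟨e1, e2, e3⟩, e4, e5, e6⟩ := h
      subst_vars; simp_all
  simp only [hXZ]
  rw [Finset.sum_congr rfl (fun X _ => sum_ite_and_eq X (X.2.1 = X.1.1 ∧ X.2.2.2 = X.1.2.2) (ν ^ 3))]
  simp only [Fintype.sum_prod_type]
  simp only [sum_ite_and_eq, Finset.sum_const, Finset.card_univ, smul_ite, smul_zero,
    sum_ite_eq_simple, Fintype.card_fun, Fintype.card_fin, ZMod.card, nsmul_eq_mul]
  rw [hν]
  rw [show (-(2 * ((a:ℤ) + b + c + g))) = (-((2*(a+b+c+g) : ℕ) : ℤ)) by push_cast; ring]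
  rw [zpow_neg, zpow_natCast]
  have h1 : ((p:ℂ) ^ (a+b+c+g)) ≠ 0 := pow_ne_zero _ hp0
  field_simp
  push_cast
  ring
end

section
/- Let V and E be finite types and ends : E → V × V a finite multigraph. For any two finsets X, Y ⊆ V, |∂X| + |∂Y| ≥ |∂(X \ Y)| + |∂(Y \ X)|. -/
open Classical in
/-- The edge boundary `∂W` of a finset of vertices `W` in a finite multigraph given by
`ends : E → V × V`: the edges with exactly one endpoint in `W`. -/
noncomputable def edgeBoundary {V E : Type*} [Fintype V] [Fintype E]
    (ends : E → V × V) (W : Finset V) : Finset E :=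
  Finset.univ.filter fun e =>
    ((ends e).1 ∈ W ∧ (ends e).2 ∉ W) ∨ ((ends e).1 ∉ W ∧ (ends e).2 ∈ W)

/-- Submodularity-type inequality for the edge boundary:
`|∂X| + |∂Y| ≥ |∂(X \ Y)| + |∂(Y \ X)|`. -/
theorem edgeBoundary_card_sdiff_le {V E : Type*} [Fintype V] [Fintype E] [DecidableEq V]
    (ends : E → V × V) (X Y : Finset V) :
    (edgeBoundary ends (X \ Y)).card + (edgeBoundary ends (Y \ X)).card ≤
      (edgeBoundary ends X).card + (edgeBoundary ends Y).card := by
  classical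
  have key : ∀ W : Finset V, (edgeBoundary ends W).card =
      ∑ e : E, if ((ends e).1 ∈ W ∧ (ends e).2 ∉ W) ∨ ((ends e).1 ∉ W ∧ (ends e).2 ∈ W)
        then 1 else 0 := by
    intro W
    rw [edgeBoundary, Finset.card_filter]
    exact Finset.sum_congr rfl fun e _ => by split_ifs <;> rfl
  rw [key, key, key, key, ← Finset.sum_add_distrib, ← Finset.sum_add_distrib]
  apply Finset.sum_le_sum
  intro e _
  by_cases h1 : (ends e).1 ∈ X <;> by_cases h2 : (ends e).1 ∈ Y <;>
    by_cases h3 : (ends e).2 ∈ X <;> by_cases h4 : (ends e).2 ∈ Y <;>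
      simp [Finset.mem_sdiff, h1, h2, h3, h4]
end

section
/- Let (V, E, ends) be a finite multigraph with boundary vertices V_∂ ⊆ V, and let A, B, C ⊆ V_∂ be pairwise disjoint. Then there exist a minimal cut V_A for A, a minimal cut V_B for B, and a minimal cut V_C for C that are pairwise disjoint. -/
/-- `W` is a cut for the boundary subset `X ⊆ V_∂` if `W ∩ V_∂ = X`. -/
def IsCut {V : Type*} [DecidableEq V] (Vbd : Finset V) (X W : Finset V) : Prop :=
  W ∩ Vbd = X

/-- `W` is a minimal cut for `X` if it is a cut for `X` minimizing `|∂W|`. -/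
def IsMinCut {V E : Type*} [Fintype V] [Fintype E] [DecidableEq V]
    (ends : E → V × V) (Vbd : Finset V) (X W : Finset V) : Prop :=
  IsCut Vbd X W ∧ ∀ W', IsCut Vbd X W' →
    (edgeBoundary ends W).card ≤ (edgeBoundary ends W').card

open Classical in
lemma edgeBoundary_posimodular {V E : Type*} [Fintype V] [Fintype E] [DecidableEq V]
    (ends : E → V × V) (W W' : Finset V) :
    (edgeBoundary ends (W \ W')).card + (edgeBoundary ends (W' \ W)).card ≤
      (edgeBoundary ends W).card + (edgeBoundary ends W').card := by
  classical
  unfold edgeBoundary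
  rw [Finset.card_filter, Finset.card_filter, Finset.card_filter, Finset.card_filter,
    ← Finset.sum_add_distrib, ← Finset.sum_add_distrib]
  apply Finset.sum_le_sum
  intro e _
  by_cases h1 : (ends e).1 ∈ W <;> by_cases h2 : (ends e).1 ∈ W' <;>
    by_cases h3 : (ends e).2 ∈ W <;> by_cases h4 : (ends e).2 ∈ W' <;>
    simp [Finset.mem_sdiff, h1, h2, h3, h4]

lemma exists_minCut {V E : Type*} [Fintype V] [Fintype E] [DecidableEq V]
    (ends : E → V × V) (Vbd X : Finset V) (hX : X ⊆ Vbd) :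
    ∃ W, IsMinCut ends Vbd X W := by
  classical
  have hne : (Finset.univ.filter fun W : Finset V => IsCut Vbd X W).Nonempty := by
    refine ⟨X, ?_⟩
    simp only [Finset.mem_filter, Finset.mem_univ, true_and]
    exact Finset.inter_eq_left.mpr hX
  obtain ⟨W, hWmem, hmin⟩ := Finset.exists_min_image _
    (fun W => (edgeBoundary ends W).card) hne
  refine ⟨W, ?_, ?_⟩
  · simpa using hWmem
  · intro W' hW'
    exact hmin W' (by simpa using hW')

lemma isCut_sdiff {V : Type*} [DecidableEq V] {Vbd X Y W W' : Finset V}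
    (hW : IsCut Vbd X W) (hW' : IsCut Vbd Y W') (hXY : Disjoint X Y) :
    IsCut Vbd X (W \ W') := by
  unfold IsCut at *
  ext x
  simp only [Finset.mem_inter, Finset.mem_sdiff]
  constructor
  · rintro ⟨⟨hxW, hxW'⟩, hxbd⟩
    rw [← hW]; exact Finset.mem_inter.mpr ⟨hxW, hxbd⟩
  · intro hx
    have hxW : x ∈ W ∩ Vbd := hW ▸ hx
    have hxY : x ∉ Y := Finset.disjoint_left.mp hXY hx
    have hxW' : x ∉ W' := fun h => hxY (hW' ▸ Finset.mem_inter.mpr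
      ⟨h, (Finset.mem_inter.mp hxW).2⟩)
    exact ⟨⟨(Finset.mem_inter.mp hxW).1, hxW'⟩, (Finset.mem_inter.mp hxW).2⟩

lemma isMinCut_sdiff {V E : Type*} [Fintype V] [Fintype E] [DecidableEq V]
    {ends : E → V × V} {Vbd X Y W W' : Finset V}
    (hW : IsMinCut ends Vbd X W) (hW' : IsMinCut ends Vbd Y W') (hXY : Disjoint X Y) :
    IsMinCut ends Vbd X (W \ W') := by
  have hc1 : IsCut Vbd X (W \ W') := isCut_sdiff hW.1 hW'.1 hXY
  have hc2 : IsCut Vbd Y (W' \ W) := isCut_sdiff hW'.1 hW.1 hXY.symm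
  have h1 := hW.2 _ hc1
  have h2 := hW'.2 _ hc2
  have hpos := edgeBoundary_posimodular ends W W'
  have heq : (edgeBoundary ends (W \ W')).card = (edgeBoundary ends W).card := by omega
  refine ⟨hc1, fun W'' hW'' => ?_⟩
  rw [heq]; exact hW.2 _ hW''

/-- For pairwise disjoint boundary regions `A`, `B`, `C` there exist pairwise disjoint
minimal cuts `V_A`, `V_B`, `V_C`. -/
theorem exists_disjoint_minCuts {V E : Type*} [Fintype V] [Fintype E] [DecidableEq V]
    (ends : E → V × V) (Vbd : Finset V) (A B C : Finset V)
    (hA : A ⊆ Vbd) (hB : B ⊆ Vbd) (hC : C ⊆ Vbd)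
    (hAB : Disjoint A B) (hAC : Disjoint A C) (hBC : Disjoint B C) :
    ∃ VA VB VC : Finset V,
      IsMinCut ends Vbd A VA ∧ IsMinCut ends Vbd B VB ∧ IsMinCut ends Vbd C VC ∧
      Disjoint VA VB ∧ Disjoint VA VC ∧ Disjoint VB VC := by
  obtain ⟨VA, hVA⟩ := exists_minCut ends Vbd A hA
  obtain ⟨VB0, hVB0⟩ := exists_minCut ends Vbd B hB
  obtain ⟨VC0, hVC0⟩ := exists_minCut ends Vbd C hC
  set VB := VB0 \ VA with hVBdef
  have hVB : IsMinCut ends Vbd B VB := isMinCut_sdiff hVB0 hVA hAB.symm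
  have hVC1 : IsMinCut ends Vbd C (VC0 \ VA) := isMinCut_sdiff hVC0 hVA hAC.symm
  set VC := (VC0 \ VA) \ VB with hVCdef
  have hVC : IsMinCut ends Vbd C VC := isMinCut_sdiff hVC1 hVB hBC.symm
  refine ⟨VA, VB, VC, hVA, hVB, hVC, ?_, ?_, ?_⟩
  · exact Finset.sdiff_disjoint.symm
  · exact (Disjoint.mono_left Finset.sdiff_subset Finset.sdiff_disjoint).symm
  · exact Finset.sdiff_disjoint.symm
end
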